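/- arXiv:1710.11089 — 2 statements merged into one kernel-verified Lean document; each statement's English description precedes it below -/
import Mathlib

section
/- Let W be a symmetric n×n nonnegative matrix with all row sums positive, D the diagonal of row sums, T = D^{-1}W, 0 < γ < 1, Ψ = (I - γT)^{-1}, and L = D^{-1/2}(D - W)D^{-1/2}. If v is an eigenvector of Ψ with eigenvalue λ ≠ 0, then D^{1/2}v is an eigenvector of L with eigenvalue 1 - (1 - λ^{-1})/γ. -/
theorem stmt_6 (n : ℕ) (W : Matrix (Fin n) (Fin n) ℝ)
    (hsym : W.IsSymm) (hnonneg : ∀ i j, 0 ≤ W i j)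
    (d : Fin n → ℝ) (hd : ∀ i, d i = ∑ j, W i j) (hdpos : ∀ i, 0 < d i)
    (T : Matrix (Fin n) (Fin n) ℝ)
    (hT : T = Matrix.diagonal (fun i => (d i)⁻¹) * W)
    (γ : ℝ) (hγ0 : 0 < γ) (hγ1 : γ < 1)
    (Ψ : Matrix (Fin n) (Fin n) ℝ)
    (hΨ : Ψ = ((1 : Matrix (Fin n) (Fin n) ℝ) - γ • T)⁻¹)
    (L : Matrix (Fin n) (Fin n) ℝ)
    (hL : L = Matrix.diagonal (fun i => (Real.sqrt (d i))⁻¹) *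
      (Matrix.diagonal d - W) * Matrix.diagonal (fun i => (Real.sqrt (d i))⁻¹))
    (v : Fin n → ℝ) (hv : v ≠ 0) (lam : ℝ) (hlam : lam ≠ 0)
    (heig : Ψ.mulVec v = lam • v) :
    L.mulVec ((Matrix.diagonal (fun i => Real.sqrt (d i))).mulVec v) =
      (1 - (1 - lam⁻¹) / γ) • (Matrix.diagonal (fun i => Real.sqrt (d i))).mulVec v ∧
    (Matrix.diagonal (fun i => Real.sqrt (d i))).mulVec v ≠ 0 := by
  have hdne : ∀ i, d i ≠ 0 := fun i => (hdpos i).ne'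
  have hsqrtpos : ∀ i, 0 < Real.sqrt (d i) := fun i => Real.sqrt_pos.mpr (hdpos i)
  -- entries of T
  have hTapp : ∀ i j, T i j = (d i)⁻¹ * W i j := by
    intro i j
    simp [hT, Matrix.diagonal_mul]
  have hTnn : ∀ i j, 0 ≤ T i j := fun i j => by
    rw [hTapp]
    exact mul_nonneg (inv_nonneg.mpr (hdpos i).le) (hnonneg i j)
  have hTsum : ∀ i, ∑ j, T i j = 1 := by
    intro i
    simp only [hTapp]
    rw [← Finset.mul_sum, ← hd i, inv_mul_cancel₀ (hdne i)]
  have hTle : ∀ i, T i i ≤ 1 := by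
    intro i
    rw [← hTsum i]
    exact Finset.single_le_sum (fun j _ => hTnn i j) (Finset.mem_univ i)
  set M : Matrix (Fin n) (Fin n) ℝ := (1 : Matrix (Fin n) (Fin n) ℝ) - γ • T with hM
  have hMapp : ∀ i j, M i j = (if i = j then 1 else 0) - γ * T i j := by
    intro i j
    simp [hM, Matrix.one_apply, Matrix.sub_apply]
  -- M is strictly diagonally dominant
  have hdet : M.det ≠ 0 := by
    apply det_ne_zero_of_sum_row_lt_diag
    intro k
    have h1 : ∑ j ∈ Finset.univ.erase k, ‖M k j‖ = γ * (1 - T k k) := by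
      rw [show γ * (1 - T k k) = ∑ j ∈ Finset.univ.erase k, γ * T k j by
        rw [← Finset.mul_sum, Finset.sum_erase_eq_sub (Finset.mem_univ k), hTsum k]]
      refine Finset.sum_congr rfl fun j hj => ?_
      have hjk : k ≠ j := fun h => (Finset.mem_erase.mp hj).1 h.symm
      rw [hMapp, if_neg hjk, zero_sub, norm_neg, Real.norm_eq_abs,
        abs_of_nonneg (mul_nonneg hγ0.le (hTnn k j))]
    have h2 : ‖M k k‖ = 1 - γ * T k k := by
      rw [hMapp, if_pos rfl, Real.norm_eq_abs, abs_of_nonneg]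
      have : γ * T k k ≤ 1 := mul_le_one₀ hγ1.le (hTnn k k) (hTle k)
      linarith
    rw [h1, h2]
    nlinarith [hTnn k k, hTle k]
  have hunit : IsUnit M.det := isUnit_iff_ne_zero.mpr hdet
  have hMΨ : M * Ψ = 1 := by rw [hΨ]; exact Matrix.mul_nonsing_inv M hunit
  -- derive eigen equation for T
  have hv1 : v = lam • M.mulVec v := by
    calc v = (M * Ψ).mulVec v := by rw [hMΨ, Matrix.one_mulVec]
    _ = M.mulVec (Ψ.mulVec v) := by rw [← Matrix.mulVec_mulVec]
    _ = M.mulVec (lam • v) := by rw [heig]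
    _ = lam • M.mulVec v := Matrix.mulVec_smul M lam v
  have hMv : M.mulVec v = lam⁻¹ • v := by
    have h := congrArg (fun w => lam⁻¹ • w) hv1
    simpa [smul_smul, inv_mul_cancel₀ hlam] using h.symm
  set c : ℝ := (1 - lam⁻¹) / γ with hc
  have hTv : T.mulVec v = c • v := by
    have h0 : v - γ • T.mulVec v = lam⁻¹ • v := by
      rw [← hMv, hM, Matrix.sub_mulVec, Matrix.one_mulVec, Matrix.smul_mulVec]
    have h1 : γ • T.mulVec v = (1 - lam⁻¹) • v := by
      rw [sub_smul, one_smul, ← h0]; abel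
    have := congrArg (fun w => γ⁻¹ • w) h1
    simpa [smul_smul, inv_mul_cancel₀ hγ0.ne', hc, div_eq_inv_mul] using this
  have hWv : W.mulVec v = c • (Matrix.diagonal d).mulVec v := by
    have hDT : Matrix.diagonal d * T = W := by
      rw [hT, ← Matrix.mul_assoc, Matrix.diagonal_mul_diagonal]
      rw [show (fun i => d i * (d i)⁻¹) = fun _ => (1:ℝ) by
        funext i; exact mul_inv_cancel₀ (hdne i)]
      simp [Matrix.diagonal_one]
    rw [← hDT, ← Matrix.mulVec_mulVec, hTv, Matrix.mulVec_smul]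
  set S := Matrix.diagonal (fun i => Real.sqrt (d i)) with hS
  set Si := Matrix.diagonal (fun i => (Real.sqrt (d i))⁻¹) with hSi
  have hSiS : Si * S = 1 := by
    rw [hSi, hS, Matrix.diagonal_mul_diagonal]
    rw [show (fun i => (Real.sqrt (d i))⁻¹ * Real.sqrt (d i)) = fun _ => (1:ℝ) by
      funext i; exact inv_mul_cancel₀ (hsqrtpos i).ne']
    simp [Matrix.diagonal_one]
  have hSiD : Si * Matrix.diagonal d = S := by
    rw [hSi, hS, Matrix.diagonal_mul_diagonal]
    refine congrArg Matrix.diagonal (funext fun i => ?_)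
    rw [inv_mul_eq_div, div_eq_iff (hsqrtpos i).ne', Real.mul_self_sqrt (hdpos i).le]
  constructor
  · have : L * S = Si * (Matrix.diagonal d - W) := by
      rw [hL, Matrix.mul_assoc, Matrix.mul_assoc, hSiS, Matrix.mul_one]
    have hSiDv : Si.mulVec ((Matrix.diagonal d).mulVec v) = S.mulVec v := by
      rw [Matrix.mulVec_mulVec, hSiD]
    rw [Matrix.mulVec_mulVec, this, ← Matrix.mulVec_mulVec, Matrix.sub_mulVec, hWv,
      show (Matrix.diagonal d).mulVec v - c • (Matrix.diagonal d).mulVec v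
          = (1 - c) • (Matrix.diagonal d).mulVec v by ext i; simp [sub_smul]; ring,
      Matrix.mulVec_smul, hSiDv]
  · intro h
    apply hv
    funext i
    have := congrFun h i
    rw [Matrix.mulVec_diagonal] at this
    have := mul_eq_zero.mp this
    rcases this with h' | h'
    · exact absurd h' (hsqrtpos i).ne'
    · exact h'
end

section
/- Let W be a symmetric n×n nonnegative matrix with all row sums positive, D the diagonal of row sums, T = D^{-1}W, 0 < γ < 1, Ψ = (I - γT)^{-1}, and L = D^{-1/2}(D - W)D^{-1/2}. If u is an eigenvector of L with eigenvalue μ and 1 - γ(1 - μ) ≠ 0, then D^{-1/2}u is an eigenvector of Ψ with eigenvalue 1/(1 - γ(1 - μ)). -/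
theorem stmt_7 (n : ℕ) (W : Matrix (Fin n) (Fin n) ℝ)
    (hsym : W.IsSymm) (hnonneg : ∀ i j, 0 ≤ W i j)
    (d : Fin n → ℝ) (hd : ∀ i, d i = ∑ j, W i j) (hdpos : ∀ i, 0 < d i)
    (T : Matrix (Fin n) (Fin n) ℝ)
    (hT : T = Matrix.diagonal (fun i => (d i)⁻¹) * W)
    (γ : ℝ) (hγ0 : 0 < γ) (hγ1 : γ < 1)
    (Ψ : Matrix (Fin n) (Fin n) ℝ)
    (hΨ : Ψ = ((1 : Matrix (Fin n) (Fin n) ℝ) - γ • T)⁻¹)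
    (L : Matrix (Fin n) (Fin n) ℝ)
    (hL : L = Matrix.diagonal (fun i => (Real.sqrt (d i))⁻¹) *
      (Matrix.diagonal d - W) * Matrix.diagonal (fun i => (Real.sqrt (d i))⁻¹))
    (u : Fin n → ℝ) (hu : u ≠ 0) (μ : ℝ)
    (heig : L.mulVec u = μ • u) (hne : 1 - γ * (1 - μ) ≠ 0) :
    Ψ.mulVec ((Matrix.diagonal (fun i => (Real.sqrt (d i))⁻¹)).mulVec u) =
      (1 / (1 - γ * (1 - μ))) • (Matrix.diagonal (fun i => (Real.sqrt (d i))⁻¹)).mulVec u ∧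
    (Matrix.diagonal (fun i => (Real.sqrt (d i))⁻¹)).mulVec u ≠ 0 := by
  have hsq : ∀ i, Real.sqrt (d i) ≠ 0 := fun i =>
    ne_of_gt (Real.sqrt_pos.mpr (hdpos i))
  have hdsq : ∀ i, d i = Real.sqrt (d i) * Real.sqrt (d i) := fun i =>
    (Real.mul_self_sqrt (hdpos i).le).symm
  set S := Matrix.diagonal (fun i => (Real.sqrt (d i))⁻¹) with hS
  set v := S.mulVec u with hv
  have hvi : ∀ i, v i = (Real.sqrt (d i))⁻¹ * u i := fun i => by
    simp [hv, hS, Matrix.mulVec_diagonal]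
  -- v ≠ 0
  have hvne : v ≠ 0 := by
    intro h
    apply hu
    funext i
    have h1 := congrFun h i
    rw [hvi i] at h1
    have : (Real.sqrt (d i))⁻¹ ≠ 0 := inv_ne_zero (hsq i)
    simpa [this] using h1
  -- from eigenvector equation
  have h1 : S.mulVec ((Matrix.diagonal d - W).mulVec v) = μ • u := by
    rw [hL] at heig
    rw [← heig, ← Matrix.mulVec_mulVec, ← Matrix.mulVec_mulVec]
  have h2 : (Matrix.diagonal d - W).mulVec v = fun i => μ * (Real.sqrt (d i) * u i) := by
    funext i
    have := congrFun h1 i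
    rw [hS] at this
    rw [Matrix.mulVec_diagonal] at this
    have h3 : (Real.sqrt (d i)) * ((Real.sqrt (d i))⁻¹ *
        ((Matrix.diagonal d - W).mulVec v i)) = Real.sqrt (d i) * ((μ • u) i) := by
      rw [this]
    rw [← mul_assoc, mul_inv_cancel₀ (hsq i), one_mul] at h3
    rw [h3, Pi.smul_apply, smul_eq_mul]
    ring
  have hDv : (Matrix.diagonal d).mulVec v = fun i => Real.sqrt (d i) * u i := by
    funext i
    rw [Matrix.mulVec_diagonal, hvi i, hdsq i, Real.sqrt_mul_self (Real.sqrt_nonneg (d i))]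
    field_simp [hsq i]
  have hWv : W.mulVec v = fun i => (1 - μ) * (Real.sqrt (d i) * u i) := by
    funext i
    have hsub := congrFun (Matrix.sub_mulVec (Matrix.diagonal d) W v) i
    simp only [h2, hDv, Pi.sub_apply] at hsub
    linear_combination hsub
  have hTv : T.mulVec v = (1 - μ) • v := by
    funext i
    rw [hT, ← Matrix.mulVec_mulVec, hWv, Matrix.mulVec_diagonal]
    rw [Pi.smul_apply, hvi i, smul_eq_mul, hdsq i, Real.sqrt_mul_self (Real.sqrt_nonneg (d i))]
    field_simp [hsq i]
  set c := 1 - γ * (1 - μ) with hc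
  have hMv : ((1 : Matrix (Fin n) (Fin n) ℝ) - γ • T).mulVec v = c • v := by
    rw [Matrix.sub_mulVec, Matrix.one_mulVec, Matrix.smul_mulVec, hTv, hc]
    funext i
    simp [smul_smul]
    ring
  -- invertibility
  have hTentry : ∀ i j, T i j = (d i)⁻¹ * W i j := fun i j => by
    rw [hT]; simp [Matrix.diagonal_mul]
  have hdet : ((1 : Matrix (Fin n) (Fin n) ℝ) - γ • T).det ≠ 0 := by
    apply det_ne_zero_of_sum_row_lt_diag
    intro k
    have hdk := hdpos k
    have ht0 : 0 ≤ (d k)⁻¹ * W k k :=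
      mul_nonneg (inv_nonneg.mpr hdk.le) (hnonneg k k)
    have hsum : ∑ j ∈ Finset.univ.erase k,
        ‖((1 : Matrix (Fin n) (Fin n) ℝ) - γ • T) k j‖
        = γ * ((d k)⁻¹ * (d k - W k k)) := by
      have : ∀ j ∈ Finset.univ.erase k,
          ‖((1 : Matrix (Fin n) (Fin n) ℝ) - γ • T) k j‖
          = γ * ((d k)⁻¹ * W k j) := by
        intro j hj
        have hjk : k ≠ j := fun h => (Finset.mem_erase.mp hj).1 h.symm
        have : ((1 : Matrix (Fin n) (Fin n) ℝ) - γ • T) k j = -(γ * ((d k)⁻¹ * W k j)) := by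
          simp [Matrix.sub_apply, Matrix.one_apply_ne hjk, hTentry k j]
        rw [this, norm_neg, Real.norm_eq_abs, abs_of_nonneg]
        exact mul_nonneg hγ0.le (mul_nonneg (inv_nonneg.mpr hdk.le) (hnonneg k j))
      rw [Finset.sum_congr rfl this, ← Finset.mul_sum, ← Finset.mul_sum]
      congr 1
      congr 1
      rw [Finset.sum_erase_eq_sub (Finset.mem_univ k), ← hd k]
    rw [hsum]
    have hdiag : ((1 : Matrix (Fin n) (Fin n) ℝ) - γ • T) k k
        = 1 - γ * ((d k)⁻¹ * W k k) := by
      simp [Matrix.sub_apply, Matrix.one_apply_eq, hTentry k k]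
    rw [hdiag, Real.norm_eq_abs]
    have hle : 1 - γ * ((d k)⁻¹ * W k k) ≤ |1 - γ * ((d k)⁻¹ * W k k)| := le_abs_self _
    have hexp : γ * ((d k)⁻¹ * (d k - W k k)) = γ - γ * ((d k)⁻¹ * W k k) := by
      field_simp
    rw [hexp]
    linarith
  have hunit : IsUnit ((1 : Matrix (Fin n) (Fin n) ℝ) - γ • T).det :=
    isUnit_iff_ne_zero.mpr hdet
  have hΨM : Ψ.mulVec (((1 : Matrix (Fin n) (Fin n) ℝ) - γ • T).mulVec v) = v := by
    rw [Matrix.mulVec_mulVec, hΨ, Matrix.nonsing_inv_mul _ hunit, Matrix.one_mulVec]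
  rw [hMv, Matrix.mulVec_smul] at hΨM
  refine ⟨?_, hvne⟩
  have hfin := congrArg (fun x => c⁻¹ • x) hΨM
  simp only [smul_smul, inv_mul_cancel₀ hne, one_smul] at hfin
  rw [one_div]
  exact hfin
end
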